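/- arXiv:2105.06436 — 2 statements merged into one kernel-verified Lean document; each statement's English description precedes it below -/
import Mathlib

section
/- For vectors a, b ∈ ℝ^k, the minimum over 1 ≤ i ≤ k of |a_i b_i| is at most k^{-3/2} ‖a‖₁ ‖b‖₂. -/
open Finset in
lemma amgm_aux (k : ℕ) (hk : 0 < k) (f : Fin k → ℝ) (hf : ∀ i, 0 ≤ f i) :
    ∏ i, f i ≤ ((∑ i, f i) / k) ^ k := by
  have hk' : (k : ℝ) ≠ 0 := Nat.cast_ne_zero.mpr hk.ne'
  have h := Real.geom_mean_le_arith_mean_weighted Finset.univ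
      (fun _ => (k : ℝ)⁻¹) f (fun i _ => by positivity)
      (by simp [Finset.card_univ, hk']) (fun i _ => hf i)
  have hsum : ∑ i, ((k:ℝ)⁻¹ * f i) = (∑ i, f i) / k := by
    rw [← Finset.mul_sum]; ring
  rw [hsum] at h
  have hL : 0 ≤ ∏ i, f i ^ ((k:ℝ)⁻¹) :=
    Finset.prod_nonneg fun i _ => Real.rpow_nonneg (hf i) _
  have := pow_le_pow_left₀ hL h k
  calc ∏ i, f i = (∏ i, f i ^ ((k:ℝ)⁻¹)) ^ k := by
        rw [← Finset.prod_pow]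
        refine Finset.prod_congr rfl fun i _ => ?_
        rw [← Real.rpow_natCast (f i ^ ((k:ℝ)⁻¹)) k, ← Real.rpow_mul (hf i),
          inv_mul_cancel₀ hk', Real.rpow_one]
    _ ≤ ((∑ i, f i) / k) ^ k := this

open Finset in
theorem stmt1 (k : ℕ) (hk : 0 < k) (a b : Fin k → ℝ) :
    ∃ i : Fin k, |a i * b i| ≤
      (k : ℝ) ^ (-(3 : ℝ) / 2) * (∑ j, |a j|) * Real.sqrt (∑ j, (b j) ^ 2) := by
  by_contra hcon
  push_neg at hcon
  set A := ∑ j, |a j| with hA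
  set B := ∑ j, (b j) ^ 2 with hB
  have hA0 : 0 ≤ A := Finset.sum_nonneg fun j _ => abs_nonneg _
  have hB0 : 0 ≤ B := Finset.sum_nonneg fun j _ => sq_nonneg _
  set C := (k : ℝ) ^ (-(3:ℝ)/2) * A * Real.sqrt B with hC
  have hkpos : (0:ℝ) < k := Nat.cast_pos.mpr hk
  have hC0 : 0 ≤ C := by positivity
  have hsqrtk : (0:ℝ) < Real.sqrt k := Real.sqrt_pos.mpr hkpos
  rcases hC0.lt_or_eq with hCpos | hCeq0
  swap
  · -- C = 0 : then A = 0 or sqrt B = 0, so some term is 0, contradicting hcon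
    have h0 : (k:ℝ) ^ (-(3:ℝ)/2) * A * Real.sqrt B = 0 := hCeq0.symm
    have hk32 : (0:ℝ) < (k:ℝ) ^ (-(3:ℝ)/2) := Real.rpow_pos_of_pos hkpos _
    have : A * Real.sqrt B = 0 := by
      rcases mul_eq_zero.mp (by linarith [h0] : ((k:ℝ) ^ (-(3:ℝ)/2) * A) * Real.sqrt B = 0) with h | h
      · rcases mul_eq_zero.mp h with h' | h'
        · exact absurd h' hk32.ne'
        · simp [h']
      · simp [h]
    rcases mul_eq_zero.mp this with h | h
    · have ha : ∀ j ∈ Finset.univ, |a j| = 0 :=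
        (Finset.sum_eq_zero_iff_of_nonneg (fun j _ => abs_nonneg _)).mp h
      have := hcon ⟨0, hk⟩
      rw [← hCeq0, abs_mul, ha ⟨0, hk⟩ (Finset.mem_univ _), zero_mul] at this
      exact lt_irrefl _ this
    · have hB' : B = 0 := by
        have := Real.sqrt_eq_zero hB0 |>.mp h
        exact this
      have hb : ∀ j ∈ Finset.univ, (b j)^2 = 0 :=
        (Finset.sum_eq_zero_iff_of_nonneg (fun j _ => sq_nonneg _)).mp hB'
      have hb0 : b ⟨0, hk⟩ = 0 := by
        have := hb ⟨0, hk⟩ (Finset.mem_univ _); nlinarith [this]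
      have := hcon ⟨0, hk⟩
      rw [← hCeq0, abs_mul, hb0, abs_zero, mul_zero] at this
      exact lt_irrefl _ this
  -- each term positive
  have hpos : ∀ i, 0 < |a i * b i| := fun i => lt_of_le_of_lt hC0 (hcon i)
  -- product bound from below
  have hprodgt : C ^ k < ∏ i, |a i * b i| := by
    calc C ^ k = ∏ _i : Fin k, C := by simp [Finset.prod_const, Finset.card_univ]
    _ < ∏ i, |a i * b i| := by
        apply Finset.prod_lt_prod_of_nonempty
        · intro i _
          exact hCpos
        · exact fun i _ => hcon i
        · exact Finset.univ_nonempty_iff.mpr ⟨⟨0, hk⟩⟩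
  -- product bound from above
  have hprodA : ∏ i, |a i| ≤ (A / k) ^ k := amgm_aux k hk _ (fun i => abs_nonneg _)
  have hprodB2 : ∏ i, (b i)^2 ≤ (B / k) ^ k := amgm_aux k hk _ (fun i => sq_nonneg _)
  have hprodB : ∏ i, |b i| ≤ Real.sqrt (B / k) ^ k := by
    have h1 : (∏ i, |b i|)^2 = ∏ i, (b i)^2 := by
      rw [← Finset.prod_pow]; exact Finset.prod_congr rfl fun i _ => sq_abs _
    have h2 : (Real.sqrt (B / k) ^ k)^2 = (B / k) ^ k := by
      rw [← pow_mul, mul_comm, pow_mul, Real.sq_sqrt (by positivity)]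
    have hL : 0 ≤ ∏ i, |b i| := Finset.prod_nonneg fun i _ => abs_nonneg _
    have hR : 0 ≤ Real.sqrt (B / k) ^ k := by positivity
    nlinarith [hprodB2]
  have hCeq : C = (A / k) * Real.sqrt (B / k) := by
    have hks : (k:ℝ) * Real.sqrt k = (k:ℝ) ^ ((3:ℝ)/2) := by
      have h := Real.rpow_add hkpos 1 (1/2)
      rw [Real.rpow_one] at h
      rw [Real.sqrt_eq_rpow, ← h]
      norm_num
    have hneg : (k:ℝ) ^ (-(3:ℝ)/2) = ((k:ℝ) * Real.sqrt k)⁻¹ := by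
      rw [hks, ← Real.rpow_neg hkpos.le]
      norm_num
    rw [hC, hneg, Real.sqrt_div hB0]
    field_simp
  have hle : ∏ i, |a i * b i| ≤ C ^ k := by
    calc ∏ i, |a i * b i| = (∏ i, |a i|) * (∏ i, |b i|) := by
          rw [← Finset.prod_mul_distrib]
          exact Finset.prod_congr rfl fun i _ => abs_mul _ _
      _ ≤ (A / k) ^ k * Real.sqrt (B / k) ^ k := by
          apply mul_le_mul hprodA hprodB (Finset.prod_nonneg fun i _ => abs_nonneg _) (by positivity)
      _ = C ^ k := by rw [hCeq, mul_pow]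
  exact absurd (lt_of_lt_of_le hprodgt hle) (lt_irrefl _)
end

section
/- Let {M_i}_{i≥0} be positive with i M_i ≤ k M_k for 1 ≤ i ≤ k, let {A_i} be a nondecreasing positive sequence with A_i M_i ≥ i²/12 for i ≥ 4, and let {L_i} be nonnegative with average L_k^{avg} = (1/k)Σ_{i=0}^{k−1}L_i. Then for every k ≥ 12, Σ_{i=⌈k/3⌉}^{k−1} (M_i + L_i)/√(A_{i+1} M_i) ≤ 6√3 (2 M_k + L_k^{avg}). -/
open Finset in
theorem stmt18 (M A L : ℕ → ℝ)
    (hMpos : ∀ i, 0 < M i) (hApos : ∀ i, 0 < A i) (hAmono : Monotone A)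
    (hLnn : ∀ i, 0 ≤ L i)
    (k : ℕ) (hk : 12 ≤ k)
    (hMk : ∀ i, 1 ≤ i → i ≤ k → (i : ℝ) * M i ≤ (k : ℝ) * M k)
    (hAM : ∀ i : ℕ, 4 ≤ i → (i : ℝ) ^ 2 / 12 ≤ A i * M i) :
    ∑ i ∈ Icc ⌈(k : ℝ) / 3⌉₊ (k - 1), (M i + L i) / Real.sqrt (A (i + 1) * M i) ≤
      6 * Real.sqrt 3 * (2 * M k + (1 / (k : ℝ)) * ∑ i ∈ range k, L i) := by
  set s := Real.sqrt 3 with hs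
  have hs2 : s ^ 2 = 3 := Real.sq_sqrt (by norm_num)
  have hspos : 0 < s := Real.sqrt_pos.mpr (by norm_num)
  set m := ⌈(k : ℝ) / 3⌉₊ with hmdef
  have hkR : (12:ℝ) ≤ (k:ℝ) := by exact_mod_cast hk
  have hkpos : (0:ℝ) < k := by linarith
  have hmk3 : (k : ℝ)/3 ≤ (m : ℝ) := Nat.le_ceil _
  have hm4 : 4 ≤ m := by
    have h : (4:ℝ) ≤ (m:ℝ) := by linarith
    exact_mod_cast h
  have hmk : m ≤ k := by
    rw [hmdef]; exact Nat.ceil_le.mpr (by push_cast; linarith)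
  have hmpos : (0:ℝ) < (m:ℝ) := by
    have : (0:ℝ) < 4 := by norm_num
    have h4 : (4:ℝ) ≤ (m:ℝ) := by exact_mod_cast hm4
    linarith
  have key : ∀ i ∈ Icc m (k-1),
      (M i + L i) / Real.sqrt (A (i + 1) * M i) ≤ 2*s*(M i)/(i:ℝ) + 2*s*(L i)/(i:ℝ) := by
    intro i hi
    obtain ⟨hi1, hi2⟩ := mem_Icc.mp hi
    have h4i : 4 ≤ i := le_trans hm4 hi1
    have hipos : (0:ℝ) < (i:ℝ) := by exact_mod_cast Nat.lt_of_lt_of_le (by norm_num) h4i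
    have hAM' : (i:ℝ)^2/12 ≤ A (i+1) * M i :=
      le_trans (hAM i h4i) (mul_le_mul_of_nonneg_right (hAmono (Nat.le_succ i)) (hMpos i).le)
    have hlow : (i:ℝ)/(2*s) ≤ Real.sqrt (A (i+1) * M i) := by
      rw [Real.le_sqrt' (by positivity)]
      calc ((i:ℝ)/(2*s))^2 = (i:ℝ)^2/(4*s^2) := by ring
        _ = (i:ℝ)^2/12 := by rw [hs2]; norm_num
        _ ≤ _ := hAM'
    have hlowpos : (0:ℝ) < (i:ℝ)/(2*s) := by positivity
    have hnn : 0 ≤ M i + L i := by have := hMpos i; have := hLnn i; linarith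
    calc (M i + L i) / Real.sqrt (A (i + 1) * M i)
        ≤ (M i + L i) / ((i:ℝ)/(2*s)) := by gcongr
      _ = 2*s*(M i)/(i:ℝ) + 2*s*(L i)/(i:ℝ) := by field_simp
  have hsplit := Finset.sum_le_sum key
  have hsum : ∑ i ∈ Icc m (k-1), (2*s*(M i)/(i:ℝ) + 2*s*(L i)/(i:ℝ))
      = 2*s*(∑ i ∈ Icc m (k-1), M i/(i:ℝ)) + 2*s*(∑ i ∈ Icc m (k-1), L i/(i:ℝ)) := by
    rw [Finset.sum_add_distrib, Finset.mul_sum, Finset.mul_sum]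
    congr 1 <;> (apply Finset.sum_congr rfl; intros; ring)
  have hMbound : ∑ i ∈ Icc m (k-1), M i/(i:ℝ) ≤ 6 * M k := by
    have step1 : ∀ i ∈ Icc m (k-1), M i/(i:ℝ) ≤ (k:ℝ)*M k/(m:ℝ)^2 := by
      intro i hi
      obtain ⟨hi1, hi2⟩ := mem_Icc.mp hi
      have h4i : 4 ≤ i := le_trans hm4 hi1
      have hipos : (0:ℝ) < (i:ℝ) := by exact_mod_cast Nat.lt_of_lt_of_le (by norm_num) h4i
      have hik : i ≤ k := le_trans hi2 (Nat.sub_le k 1)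
      have h1 := hMk i (by omega) hik
      have hmi : (m:ℝ) ≤ (i:ℝ) := by exact_mod_cast hi1
      have hMknn : (0:ℝ) ≤ (k:ℝ) * M k := mul_nonneg hkpos.le (hMpos k).le
      calc M i/(i:ℝ) = (i:ℝ)*M i/(i:ℝ)^2 := by field_simp
        _ ≤ (k:ℝ)*M k/(i:ℝ)^2 := by gcongr
        _ ≤ (k:ℝ)*M k/(m:ℝ)^2 := by gcongr
    have step2 := Finset.sum_le_card_nsmul _ _ _ step1
    have hcard : (((Icc m (k-1)).card : ℕ):ℝ) ≤ 2*(k:ℝ)/3 := by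
      rw [Nat.card_Icc]
      have h : k - 1 + 1 - m = k - m := by omega
      rw [h, Nat.cast_sub hmk]
      linarith
    have hterm : (k:ℝ)*M k/(m:ℝ)^2 ≤ 9 * M k / (k:ℝ) := by
      have hm2 : (k:ℝ)^2/9 ≤ (m:ℝ)^2 := by nlinarith
      have hk29 : (0:ℝ) < (k:ℝ)^2/9 := by positivity
      calc (k:ℝ)*M k/(m:ℝ)^2 ≤ (k:ℝ)*M k/((k:ℝ)^2/9) :=
            div_le_div_of_nonneg_left (mul_nonneg hkpos.le (hMpos k).le) hk29 hm2
          _ = 9 * M k / (k:ℝ) := by field_simp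
    have htermnn : (0:ℝ) ≤ (k:ℝ)*M k/(m:ℝ)^2 := div_nonneg (mul_nonneg hkpos.le (hMpos k).le) (by positivity)
    calc ∑ i ∈ Icc m (k-1), M i/(i:ℝ)
        ≤ (Icc m (k-1)).card • ((k:ℝ)*M k/(m:ℝ)^2) := step2
      _ = ((Icc m (k-1)).card : ℝ) * ((k:ℝ)*M k/(m:ℝ)^2) := by
          rw [nsmul_eq_mul]
      _ ≤ (2*(k:ℝ)/3) * (9 * M k / (k:ℝ)) := by
          apply mul_le_mul hcard hterm htermnn (by linarith)
      _ = 6 * M k := by field_simp; ring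
  have hLbound : ∑ i ∈ Icc m (k-1), L i/(i:ℝ) ≤ (3/(k:ℝ)) * ∑ i ∈ range k, L i := by
    have step1 : ∑ i ∈ Icc m (k-1), L i/(i:ℝ) ≤ ∑ i ∈ Icc m (k-1), (3/(k:ℝ)) * L i := by
      apply Finset.sum_le_sum
      intro i hi
      obtain ⟨hi1, hi2⟩ := mem_Icc.mp hi
      have hmi : (m:ℝ) ≤ (i:ℝ) := by exact_mod_cast hi1
      have hipos : (0:ℝ) < (i:ℝ) := by linarith
      have hfrac : (1:ℝ)/(i:ℝ) ≤ 3/(k:ℝ) := by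
        rw [div_le_div_iff₀ hipos hkpos]; linarith
      calc L i / (i:ℝ) = L i * (1/(i:ℝ)) := by ring
        _ ≤ L i * (3/(k:ℝ)) := mul_le_mul_of_nonneg_left hfrac (hLnn i)
        _ = (3/(k:ℝ)) * L i := by ring
    have step2 : ∑ i ∈ Icc m (k-1), (3/(k:ℝ)) * L i ≤ ∑ i ∈ range k, (3/(k:ℝ)) * L i := by
      apply Finset.sum_le_sum_of_subset_of_nonneg
      · intro i hi
        obtain ⟨_, hi2⟩ := mem_Icc.mp hi
        exact mem_range.mpr (by omega)
      · intro i _ _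
        exact mul_nonneg (by positivity) (hLnn i)
    rw [Finset.mul_sum]
    exact le_trans step1 step2
  refine le_trans hsplit ?_
  rw [hsum]
  have h1 : 2*s*(∑ i ∈ Icc m (k-1), M i/(i:ℝ)) ≤ 2*s*(6*M k) :=
    mul_le_mul_of_nonneg_left hMbound (by positivity)
  have h2 : 2*s*(∑ i ∈ Icc m (k-1), L i/(i:ℝ)) ≤ 2*s*((3/(k:ℝ)) * ∑ i ∈ range k, L i) :=
    mul_le_mul_of_nonneg_left hLbound (by positivity)
  have heq : 6*s*(2*M k + (1/(k:ℝ)) * ∑ i ∈ range k, L i)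
      = 2*s*(6*M k) + 2*s*((3/(k:ℝ)) * ∑ i ∈ range k, L i) := by
    field_simp; ring
  linarith
end
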